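/- arXiv:2209.09281 — 2 statements merged into one kernel-verified Lean document; each statement's English description precedes it below -/
import Mathlib

section
/- Let |ψ⟩ = (1/√3)(|0000⟩+|1100⟩+|1111⟩) on qubits R,A,S,B, |φ⟩ = |ok⟩_{RA}⊗|ok⟩_{SB} with |ok⟩=(|00⟩−|11⟩)/√2, and for b∈{0,1} let π_b^B = 1_{RA} ⊗ |bb⟩⟨bb|_{SB}. Define P(b) := |⟨φ| π_b^B |ψ⟩|² / Σ_{b'∈{0,1}} |⟨φ| π_{b'}^B |ψ⟩|². Then the denominator equals 1/12 and P(0) = 0, P(1) = 1. -/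
open BigOperators

/-- Two-qubit basis labels. -/
abbrev Q2 := Fin 2 × Fin 2
/-- Four-qubit basis labels, grouped as (R,A) × (S,B). -/
abbrev Q4 := Q2 × Q2

/-- `1/√3`. -/
noncomputable def c3 : ℂ := ((Real.sqrt 3 : ℝ) : ℂ)⁻¹
/-- `1/√2`. -/
noncomputable def c2 : ℂ := ((Real.sqrt 2 : ℝ) : ℂ)⁻¹

/-- The FR state `|ψ⟩ = (1/√3)(|0000⟩ + |1100⟩ + |1111⟩)` on qubits R,A,S,B. -/
noncomputable def ψFR : Q4 → ℂ := fun p =>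
  if p = (((0, 0) : Q2), ((0, 0) : Q2)) then c3
  else if p = (((1, 1) : Q2), ((0, 0) : Q2)) then c3
  else if p = (((1, 1) : Q2), ((1, 1) : Q2)) then c3
  else 0

/-- `|ok⟩ = (1/√2)(|00⟩ − |11⟩)`. -/
noncomputable def okv : Q2 → ℂ := fun p =>
  if p = ((0, 0) : Q2) then c2 else if p = ((1, 1) : Q2) then -c2 else 0

/-- Two-qubit computational basis vector. -/
def ketv (q : Q2) : Q2 → ℂ := fun p => if p = q then 1 else 0

/-- Tensor product of two two-qubit vectors. -/
noncomputable def tens (u v : Q2 → ℂ) : Q4 → ℂ := fun p => u p.1 * v p.2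

/-- Inner product `⟨w|v⟩ = ∑ p, conj (w p) * v p`. -/
noncomputable def ip (w v : Q4 → ℂ) : ℂ := ∑ p : Q4, star (w p) * v p

/-- Projector onto Bob's outcome `b`: `π_b^B = 1_{RA} ⊗ |bb⟩⟨bb|`, applied to a vector. -/
noncomputable def projB (b : Fin 2) (v : Q4 → ℂ) : Q4 → ℂ := fun p =>
  if p.2 = ((b, b) : Q2) then v p else 0

lemma c2_mul : c2 * c2 = 1/2 := by
  simp only [c2, ← Complex.ofReal_inv, ← Complex.ofReal_mul]
  rw [← mul_inv, Real.mul_self_sqrt (by norm_num : (0:ℝ) ≤ 2)]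
  norm_num

lemma ip0 : ip (tens okv okv) (projB 0 ψFR) = 0 := by
  simp [ip, Fintype.sum_prod_type, Fin.sum_univ_two, tens, projB, ψFR, okv, Prod.ext_iff]

lemma ip1 : ip (tens okv okv) (projB 1 ψFR) = c3 / 2 := by
  simp [ip, Fintype.sum_prod_type, Fin.sum_univ_two, tens, projB, ψFR, okv, Prod.ext_iff]
  have : (starRingEnd ℂ) c2 = c2 := by simp [c2, ← Complex.ofReal_inv]
  rw [this]
  have := c2_mul
  ring_nf
  ring_nf at this
  rw [this]; ring

lemma abs1 : ‖ip (tens okv okv) (projB 1 ψFR)‖ ^ 2 = 1/12 := by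
  rw [ip1]
  rw [norm_div, div_pow]
  have : ‖c3‖ ^ 2 = 1/3 := by
    rw [c3, norm_inv]
    rw [Complex.norm_real, Real.norm_of_nonneg (Real.sqrt_nonneg 3)]
    rw [inv_pow, Real.sq_sqrt (by norm_num : (0:ℝ) ≤ 3)]; norm_num
  rw [this]; norm_num

/-- under settings (x₁,x₂)=(0,1), the post-selection success
probability is `1/12`, and `P(b=0)=0`, `P(b=1)=1`. -/
theorem fr_prediction_setting_01 :
    (∑ b' : Fin 2, ‖ip (tens okv okv) (projB b' ψFR)‖ ^ 2) = 1 / 12 ∧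
    ‖ip (tens okv okv) (projB 0 ψFR)‖ ^ 2 /
      (∑ b' : Fin 2, ‖ip (tens okv okv) (projB b' ψFR)‖ ^ 2) = 0 ∧
    ‖ip (tens okv okv) (projB 1 ψFR)‖ ^ 2 /
      (∑ b' : Fin 2, ‖ip (tens okv okv) (projB b' ψFR)‖ ^ 2) = 1 := by
  have h : (∑ b' : Fin 2, ‖ip (tens okv okv) (projB b' ψFR)‖ ^ 2) = 1 / 12 := by
    rw [Fin.sum_univ_two, ip0, abs1]; simp
  refine ⟨h, ?_, ?_⟩
  · rw [ip0]; simp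
  · rw [h, abs1]; norm_num
end

section
/- With the notation of the entanglement FR protocol (state |ψ⟩ = (1/√3)(|0000⟩+|1100⟩+|1111⟩), post-selection |φ⟩ = |ok⟩⊗|ok⟩, |ok⟩=(|00⟩−|11⟩)/√2), the conditional probability of Alice's outcome a=0 given successful post-selection depends on Bob's setting: P(a=0 | φ, (x₁,x₂)=(1,0)) = 1 while P(a=0 | φ, (x₁,x₂)=(1,1)) = 1/3, where probabilities are computed via the pre/post-selection rule P(outcome) = |⟨φ| π |ψ⟩|² / Σ |⟨φ| π' |ψ⟩|² with the appropriate projector families {|aa⟩⟨aa|_{RA}⊗1} for setting (1,0) and {|aa⟩⟨aa|_{RA}⊗|bb⟩⟨bb|_{SB}} (marginalised over b) for setting (1,1). In particular, the setting-independence assumption fails: these two predictions are unequal. -/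
open BigOperators

/-- Projector onto Alice's outcome `a`: `π_a^A = |aa⟩⟨aa| ⊗ 1_{SB}`, applied to a vector. -/
noncomputable def projA (a : Fin 2) (v : Q4 → ℂ) : Q4 → ℂ := fun p =>
  if p.1 = ((a, a) : Q2) then v p else 0

/-- Joint projector `π_{a,b} = |aa⟩⟨aa|_{RA} ⊗ |bb⟩⟨bb|_{SB}`, applied to a vector. -/
noncomputable def projAB (a b : Fin 2) (v : Q4 → ℂ) : Q4 → ℂ := fun p =>
  if p.1 = ((a, a) : Q2) ∧ p.2 = ((b, b) : Q2) then v p else 0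

/-- `P(a=0 | φ, (x₁,x₂)=(1,0))`: Bob modelled unitarily. -/
noncomputable def Pa0_setting10 : ℝ :=
  ‖ip (tens okv okv) (projA 0 ψFR)‖ ^ 2 /
    ∑ a' : Fin 2, ‖ip (tens okv okv) (projA a' ψFR)‖ ^ 2

/-- `P(a=0 | φ, (x₁,x₂)=(1,1))`: Bob's outcome identified and marginalised. -/
noncomputable def Pa0_setting11 : ℝ :=
  (∑ b : Fin 2, ‖ip (tens okv okv) (projAB 0 b ψFR)‖ ^ 2) /
    ∑ a' : Fin 2, ∑ b' : Fin 2, ‖ip (tens okv okv) (projAB a' b' ψFR)‖ ^ 2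

lemma sc2 : (starRingEnd ℂ) c2 = c2 := by simp [c2]
lemma sc3 : (starRingEnd ℂ) c3 = c3 := by simp [c3]

lemma ipA0 : ip (tens okv okv) (projA 0 ψFR) = c2 * c2 * c3 := by
  simp [ip, tens, okv, ψFR, projA, Fintype.sum_prod_type, Fin.sum_univ_two, Prod.ext_iff, sc2, sc3]

lemma ipA1 : ip (tens okv okv) (projA 1 ψFR) = 0 := by
  simp [ip, tens, okv, ψFR, projA, Fintype.sum_prod_type, Fin.sum_univ_two, Prod.ext_iff, sc2, sc3]

lemma ipAB00 : ip (tens okv okv) (projAB 0 0 ψFR) = c2 * c2 * c3 := by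
  simp [ip, tens, okv, ψFR, projAB, Fintype.sum_prod_type, Fin.sum_univ_two, Prod.ext_iff, sc2, sc3]
lemma ipAB01 : ip (tens okv okv) (projAB 0 1 ψFR) = 0 := by
  simp [ip, tens, okv, ψFR, projAB, Fintype.sum_prod_type, Fin.sum_univ_two, Prod.ext_iff, sc2, sc3]
lemma ipAB10 : ip (tens okv okv) (projAB 1 0 ψFR) = -(c2 * c2 * c3) := by
  simp [ip, tens, okv, ψFR, projAB, Fintype.sum_prod_type, Fin.sum_univ_two, Prod.ext_iff, sc2, sc3]
lemma ipAB11 : ip (tens okv okv) (projAB 1 1 ψFR) = c2 * c2 * c3 := by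
  simp [ip, tens, okv, ψFR, projAB, Fintype.sum_prod_type, Fin.sum_univ_two, Prod.ext_iff, sc2, sc3]

lemma absval : ‖c2 * c2 * c3‖ ^ 2 = 1 / 12 := by
  have h2 : (0:ℝ) ≤ Real.sqrt 2 := Real.sqrt_nonneg _
  have h3 : (0:ℝ) ≤ Real.sqrt 3 := Real.sqrt_nonneg _
  simp [c2, c3, map_mul, Complex.norm_real, abs_of_nonneg, h2, h3, mul_pow]
  norm_num

lemma absneg : ‖-(c2 * c2 * c3)‖ ^ 2 = 1 / 12 := by
  rw [norm_neg]; exact absval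

/-- the conditional probability of Alice's outcome `a = 0` given
successful post-selection depends on Bob's setting: it is `1` under settings
`(1,0)` and `1/3` under settings `(1,1)`; in particular setting-independence fails. -/
theorem fr_setting_dependence :
    Pa0_setting10 = 1 ∧ Pa0_setting11 = 1 / 3 ∧ Pa0_setting10 ≠ Pa0_setting11 := by
  have h10 : Pa0_setting10 = 1 := by
    unfold Pa0_setting10
    rw [Fin.sum_univ_two, ipA0, ipA1, absval]
    norm_num
  have h11 : Pa0_setting11 = 1 / 3 := by
    unfold Pa0_setting11
    simp only [Fin.sum_univ_two, ipAB00, ipAB01, ipAB10, ipAB11, absval, absneg]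
    norm_num
  exact ⟨h10, h11, by rw [h10, h11]; norm_num⟩
end
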